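/- Privacy amplification via subsampling: Let γ ∈ (0,1], and let M be an (ε,δ)-differentially private mechanism on databases (with respect to add/remove-one neighboring, i.e., ‖x − y‖₁ ≤ 1). Let M' be the mechanism that on input database x first forms a random sub-database by independently retaining each record of x with probability γ and then applies M to the resulting sub-database. Then M' is (ε', γδ)-differentially private, where ε' = ln(1 + γ·(e^ε − 1)); in particular ε' ≤ γ·(e^ε − 1). -/

import Mathlib

open MeasureTheory

/-- The ℓ1 distance `‖x - y‖₁` between databases `x y : 𝒳 →₀ ℕ`. -/
def dbDist {𝒳 : Type*} [DecidableEq 𝒳] (x y : 𝒳 →₀ ℕ) : ℕ :=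
  (x.support ∪ y.support).sum fun a => ((x a : ℤ) - (y a : ℤ)).natAbs

/-- Databases `x` and `y` are neighboring if `‖x - y‖₁ ≤ 1`. -/
def Neighboring {𝒳 : Type*} [DecidableEq 𝒳] (x y : 𝒳 →₀ ℕ) : Prop :=
  dbDist x y ≤ 1

/-- A mechanism `M` is `(ε, δ)`-differentially private if for all measurable sets `S` and all
neighboring databases `x, y`, `M x S ≤ e^ε * M y S + δ`. -/
def IsDP {𝒳 : Type*} [DecidableEq 𝒳] {Ω : Type*} [MeasurableSpace Ω]
    (M : (𝒳 →₀ ℕ) → Measure Ω) (ε δ : ℝ) : Prop :=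
  ∀ x y : 𝒳 →₀ ℕ, Neighboring x y → ∀ S : Set Ω, MeasurableSet S →
    M x S ≤ ENNReal.ofReal (Real.exp ε) * M y S + ENNReal.ofReal δ

/-- Subsampled mechanism: on input database `x`, first form a random sub-database by
independently retaining each record of `x` with probability `γ` (so the retained count of
each record value `a` is binomial `Bin(x a, γ)`), then apply `M` to the sub-database. -/
noncomputable def subsampledMechanism {𝒳 : Type*} [DecidableEq 𝒳] {Ω : Type*}
    [MeasurableSpace Ω] (M : (𝒳 →₀ ℕ) → Measure Ω) (γ : ℝ) :
    (𝒳 →₀ ℕ) → Measure Ω :=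
  fun x => ∑ z ∈ Finset.Iic x,
    (ENNReal.ofReal (∏ a ∈ x.support,
      (Nat.choose (x a) (z a) : ℝ) * γ ^ (z a) * (1 - γ) ^ (x a - z a))) • M z


namespace PAS
open Finset
set_option linter.unusedSectionVars false


noncomputable def b (γ : ℝ) (n k : ℕ) : ℝ := (n.choose k : ℝ) * γ ^ k * (1 - γ) ^ (n - k)

lemma b_nonneg {γ : ℝ} (h0 : 0 ≤ γ) (h1 : γ ≤ 1) (n k : ℕ) : 0 ≤ b γ n k := by
  have h2 : (0:ℝ) ≤ 1 - γ := by linarith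
  unfold b; positivity

lemma b_zero_of_lt {γ : ℝ} {n k : ℕ} (h : n < k) : b γ n k = 0 := by
  simp [b, Nat.choose_eq_zero_of_lt h]

lemma b_zero_zero {γ : ℝ} : b γ 0 0 = 1 := by simp [b]

lemma b_succ (γ : ℝ) (n k : ℕ) :
    b γ (n+1) k = (1 - γ) * b γ n k + (if k = 0 then 0 else γ * b γ n (k-1)) := by
  rcases k with _ | j
  · simp [b, pow_succ]; ring
  · simp only [Nat.succ_ne_zero, if_false, Nat.succ_sub_one]
    rcases lt_or_ge n (j+1) with h | h
    · rcases eq_or_lt_of_le (by omega : n ≤ j) with rfl | hlt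
      · rw [b_zero_of_lt (show n < n+1 by omega)]
        simp only [b, Nat.choose_self, Nat.sub_self, Nat.succ_sub_succ, pow_zero]
        ring
      · rw [b_zero_of_lt (show n < j+1 by omega), b_zero_of_lt (show n+1 < j+1 by omega),
          b_zero_of_lt (show n < j by omega)]
        ring
    · have hc : ((n+1).choose (j+1) : ℝ) = n.choose (j+1) + n.choose j := by
        rw [Nat.choose_succ_succ']; push_cast; ring
      have h3 : n - j = (n - (j+1)) + 1 := by omega
      rw [b, b, b, hc, Nat.succ_sub_succ, h3, pow_succ]
      ring

lemma sum_b {γ : ℝ} (n : ℕ) : ∑ k ∈ range (n+1), b γ n k = 1 := by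
  have := add_pow γ (1-γ) n
  simp only [add_sub_cancel, one_pow] at this
  rw [eq_comm, this]
  apply Finset.sum_congr rfl
  intro k _
  simp only [b]; ring


variable {𝒳 : Type*} [DecidableEq 𝒳]

set_option linter.unusedSectionVars false

lemma prod_congr_support {γ : ℝ} {s : Finset 𝒳} {y z : 𝒳 →₀ ℕ} (hs : y.support ⊆ s)
    (hz : z ≤ y) : ∏ a ∈ s, b γ (y a) (z a) = ∏ a ∈ y.support, b γ (y a) (z a) := by
  refine (Finset.prod_subset hs ?_).symm
  intro a _ ha
  have hy : y a = 0 := Finsupp.notMem_support_iff.mp ha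
  have hz' : z a = 0 := by have := hz a; omega
  simp [hy, hz', b_zero_zero]

lemma sum_Iic_P {γ : ℝ} (y : 𝒳 →₀ ℕ) :
    ∑ z ∈ Finset.Iic y, ∏ a ∈ y.support, b γ (y a) (z a) = 1 := by
  induction y using Finsupp.induction with
  | zero =>
    have : Finset.Iic (0 : 𝒳 →₀ ℕ) = {0} := by
      ext z; simp [Finset.mem_Iic, le_zero_iff]
    simp [this]
  | single_add a n f ha hn ih =>
    set g : 𝒳 →₀ ℕ := Finsupp.single a n + f with hg
    have hfa : f a = 0 := Finsupp.notMem_support_iff.mp ha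
    have hga : g a = n := by simp [hg, hfa]
    have hga' : ∀ a', a' ≠ a → g a' = f a' := by
      intro a' h; simp [hg, Finsupp.single_eq_of_ne' (Ne.symm h)]
    have hsupp : g.support = insert a f.support := by
      rw [hg, Finsupp.support_add_eq, Finsupp.support_single_ne_zero _ hn]
      · ext; simp
      · rw [Finsupp.support_single_ne_zero _ hn]
        simp [Finset.disjoint_singleton_left, ha]
    have key : ∑ z ∈ Finset.Iic g, ∏ a' ∈ g.support, b γ (g a') (z a')
        = ∑ p ∈ (Finset.range (n+1)) ×ˢ Finset.Iic f,
            b γ n p.1 * ∏ a' ∈ f.support, b γ (f a') (p.2 a') := by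
      refine Finset.sum_nbij' (i := fun z => (z a, z.erase a))
        (j := fun p => Finsupp.single a p.1 + p.2) ?_ ?_ ?_ ?_ ?_
      · intro z hz
        rw [Finset.mem_Iic] at hz
        simp only [Finset.mem_product, Finset.mem_range, Finset.mem_Iic]
        constructor
        · have := hz a; rw [hga] at this; omega
        · intro a'
          by_cases h : a' = a
          · simp [h, hfa]
          · rw [Finsupp.erase_ne h, ← hga' a' h]; exact hz a'
      · intro p hp
        rw [Finset.mem_product, Finset.mem_range, Finset.mem_Iic] at hp
        rw [Finset.mem_Iic]
        intro a'
        by_cases h : a' = a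
        · have : p.2 a = 0 := by have := hp.2 a; omega
          simp [h, hga, this]
          omega
        · simp [Finsupp.single_eq_of_ne' (Ne.symm h), hga' a' h]
          exact hp.2 a'
      · intro z hz
        simpa using Finsupp.single_add_erase a z
      · intro p hp
        rw [Finset.mem_product, Finset.mem_range, Finset.mem_Iic] at hp
        have hp2 : p.2 a = 0 := by have := hp.2 a; omega
        obtain ⟨k, v⟩ := p
        simp only at hp2
        simp only [Prod.mk.injEq]
        refine ⟨by simp [hp2], ?_⟩
        ext a'
        by_cases h : a' = a
        · simp [h, hp2]
        · simp [Finsupp.erase_ne h, Finsupp.single_eq_of_ne' (Ne.symm h)]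
      · intro z hz
        rw [hsupp, Finset.prod_insert ha, hga]
        congr 1
        refine Finset.prod_congr rfl ?_
        intro a' ha'
        have h : a' ≠ a := by rintro rfl; exact ha ha'
        rw [hga' a' h, Finsupp.erase_ne h]
    rw [key, Finset.sum_product]
    have : ∀ x ∈ Finset.range (n+1), ∑ y ∈ Finset.Iic f,
        b γ n (x, y).1 * ∏ a' ∈ f.support, b γ (f a') ((x, y).2 a')
        = b γ n x * ∑ y ∈ Finset.Iic f, ∏ a' ∈ f.support, b γ (f a') (y a') := by
      intro x _; rw [Finset.mul_sum]
    rw [Finset.sum_congr rfl this, ← Finset.sum_mul, sum_b, ih, one_mul]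


lemma neighbor_classify {x y : 𝒳 →₀ ℕ} (h : Neighboring x y) :
    x = y ∨ (∃ a, x = y + Finsupp.single a 1) ∨ (∃ a, y = x + Finsupp.single a 1) := by
  by_cases hxy : x = y
  · exact Or.inl hxy
  · have : ∃ a₀, x a₀ ≠ y a₀ := by
      by_contra hc
      push_neg at hc
      exact hxy (Finsupp.ext hc)
    obtain ⟨a₀, ha₀⟩ := this
    have hmem : a₀ ∈ x.support ∪ y.support := by
      rw [Finset.mem_union, Finsupp.mem_support_iff, Finsupp.mem_support_iff]
      omega
    unfold Neighboring dbDist at h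
    rw [← Finset.add_sum_erase _ _ hmem] at h
    have hterm : ((x a₀ : ℤ) - (y a₀ : ℤ)).natAbs = 1 := by omega
    have hrest : ∑ a ∈ (x.support ∪ y.support).erase a₀,
        ((x a : ℤ) - (y a : ℤ)).natAbs = 0 := by omega
    have heq : ∀ a, a ≠ a₀ → x a = y a := by
      intro a ha
      by_cases hm : a ∈ x.support ∪ y.support
      · have := Finset.sum_eq_zero_iff.mp hrest a (Finset.mem_erase.mpr ⟨ha, hm⟩)
        omega
      · rw [Finset.mem_union, Finsupp.mem_support_iff, Finsupp.mem_support_iff] at hm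
        push_neg at hm
        omega
    rcases (by omega : x a₀ = y a₀ + 1 ∨ y a₀ = x a₀ + 1) with hc | hc
    · refine Or.inr (Or.inl ⟨a₀, Finsupp.ext fun a => ?_⟩)
      by_cases ha : a = a₀
      · subst ha; simp [hc]
      · simp [Finsupp.single_eq_of_ne' (Ne.symm ha), heq a ha]
    · refine Or.inr (Or.inr ⟨a₀, Finsupp.ext fun a => ?_⟩)
      by_cases ha : a = a₀
      · subst ha; simp [hc]
      · simp [Finsupp.single_eq_of_ne' (Ne.symm ha), heq a ha]

lemma neighboring_add_single (w : 𝒳 →₀ ℕ) (a₀ : 𝒳) :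
    Neighboring w (w + Finsupp.single a₀ 1) ∧ Neighboring (w + Finsupp.single a₀ 1) w := by
  have hterm : ∀ u v : 𝒳 →₀ ℕ, (∀ a, a ≠ a₀ → u a = v a) →
      ((u a₀ : ℤ) - (v a₀ : ℤ)).natAbs ≤ 1 → dbDist u v ≤ 1 := by
    intro u v huv h₀
    unfold dbDist
    by_cases hm : a₀ ∈ u.support ∪ v.support
    · rw [← Finset.add_sum_erase _ _ hm]
      have : ∑ a ∈ (u.support ∪ v.support).erase a₀,
          ((u a : ℤ) - (v a : ℤ)).natAbs = 0 := by
        apply Finset.sum_eq_zero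
        intro a ha
        have := huv a (Finset.mem_erase.mp ha).1
        omega
      omega
    · have : ∑ a ∈ u.support ∪ v.support,
          ((u a : ℤ) - (v a : ℤ)).natAbs = 0 := by
        apply Finset.sum_eq_zero
        intro a ha
        have hne : a ≠ a₀ := by rintro rfl; exact hm ha
        have := huv a hne
        omega
      omega
  have hke : ∀ a, a ≠ a₀ → ((w + Finsupp.single a₀ 1 : 𝒳 →₀ ℕ)) a = w a := by
    intro a ha; simp [Finsupp.single_eq_of_ne' (Ne.symm ha)]
  have hka : ((w + Finsupp.single a₀ 1 : 𝒳 →₀ ℕ)) a₀ = w a₀ + 1 := by simp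
  constructor
  · exact hterm _ _ (fun a ha => (hke a ha).symm) (by rw [hka]; omega)
  · exact hterm _ _ hke (by rw [hka]; omega)


lemma subsampled_apply {Ω : Type*} [MeasurableSpace Ω] (M : (𝒳 →₀ ℕ) → Measure Ω)
    (γ : ℝ) (u : 𝒳 →₀ ℕ) (S : Set Ω) :
    subsampledMechanism M γ u S
      = ∑ z ∈ Finset.Iic u, ENNReal.ofReal (∏ a ∈ u.support, b γ (u a) (z a)) * M z S := by
  rw [subsampledMechanism, Measure.finset_sum_apply]
  refine Finset.sum_congr rfl fun z _ => ?_
  rw [Measure.smul_apply, smul_eq_mul]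
  rfl

lemma decomp {Ω : Type*} [MeasurableSpace Ω] (M : (𝒳 →₀ ℕ) → Measure Ω)
    {γ : ℝ} (hγ0 : 0 < γ) (hγ1 : γ ≤ 1) (y : 𝒳 →₀ ℕ) (a₀ : 𝒳) (S : Set Ω) :
    subsampledMechanism M γ (y + Finsupp.single a₀ 1) S
      = ENNReal.ofReal (1-γ) * subsampledMechanism M γ y S
        + ENNReal.ofReal γ * ∑ w ∈ Finset.Iic y,
            ENNReal.ofReal (∏ a ∈ y.support, b γ (y a) (w a))
              * M (w + Finsupp.single a₀ 1) S := by
  set e : 𝒳 →₀ ℕ := Finsupp.single a₀ 1 with he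
  set x : 𝒳 →₀ ℕ := y + e with hx
  have hxa₀ : x a₀ = y a₀ + 1 := by simp [hx, he]
  have hxa : ∀ a, a ≠ a₀ → x a = y a := by
    intro a h; simp [hx, he, Finsupp.single_eq_of_ne' (Ne.symm h)]
  have hyx : y ≤ x := by rw [hx]; exact self_le_add_right y e
  have ha₀x : a₀ ∈ x.support := by
    rw [Finsupp.mem_support_iff, hxa₀]; omega
  have hsupp : y.support ⊆ x.support := Finsupp.support_mono hyx
  -- coefficient identity
  have hcoef : ∀ z ∈ Finset.Iic x,
      (∏ a ∈ x.support, b γ (x a) (z a))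
        = (1-γ) * ∏ a ∈ x.support, b γ (y a) (z a)
          + (if z a₀ = 0 then 0 else γ * ∏ a ∈ x.support, b γ (y a) ((z - e) a)) := by
    intro z hz
    have hR : ∏ a ∈ x.support.erase a₀, b γ (x a) (z a)
        = ∏ a ∈ x.support.erase a₀, b γ (y a) (z a) := by
      refine Finset.prod_congr rfl fun a ha => ?_
      rw [hxa a (Finset.ne_of_mem_erase ha)]
    have hR2 : ∏ a ∈ x.support.erase a₀, b γ (y a) ((z - e) a)
        = ∏ a ∈ x.support.erase a₀, b γ (y a) (z a) := by
      refine Finset.prod_congr rfl fun a ha => ?_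
      have : (z - e) a = z a := by
        rw [Finsupp.tsub_apply, he, Finsupp.single_eq_of_ne' (Ne.symm (Finset.ne_of_mem_erase ha))]
        omega
      rw [this]
    have hze : (z - e) a₀ = z a₀ - 1 := by
      rw [Finsupp.tsub_apply, he, Finsupp.single_eq_same]
    rw [← Finset.mul_prod_erase _ _ ha₀x, ← Finset.mul_prod_erase _ (fun a => b γ (y a) (z a)) ha₀x,
      ← Finset.mul_prod_erase _ (fun a => b γ (y a) ((z - e) a)) ha₀x, hR, hR2, hze, hxa₀, b_succ]
    by_cases h0 : z a₀ = 0 <;> simp [h0] <;> ring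
  have hprodnn : ∀ (u z : 𝒳 →₀ ℕ) (s : Finset 𝒳), (0:ℝ) ≤ ∏ a ∈ s, b γ (u a) (z a) :=
    fun u z s => Finset.prod_nonneg fun a _ => b_nonneg hγ0.le hγ1 _ _
  have h1γ : (0:ℝ) ≤ 1 - γ := by linarith
  rw [subsampled_apply]
  have hsplit : ∀ z ∈ Finset.Iic x,
      ENNReal.ofReal (∏ a ∈ x.support, b γ (x a) (z a)) * M z S
        = ENNReal.ofReal ((1-γ) * ∏ a ∈ x.support, b γ (y a) (z a)) * M z S
          + ENNReal.ofReal (if z a₀ = 0 then 0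
              else γ * ∏ a ∈ x.support, b γ (y a) ((z-e) a)) * M z S := by
    intro z hz
    rw [← add_mul, ← ENNReal.ofReal_add, ← hcoef z hz]
    · exact mul_nonneg h1γ (hprodnn _ _ _)
    · split
      · exact le_refl 0
      · exact mul_nonneg hγ0.le (hprodnn _ _ _)
  rw [Finset.sum_congr rfl hsplit, Finset.sum_add_distrib]
  congr 1
  · -- first term
    have h1 : ∀ z ∈ Finset.Iic x,
        ENNReal.ofReal ((1-γ) * ∏ a ∈ x.support, b γ (y a) (z a)) * M z S
          = ENNReal.ofReal (1-γ)
              * (ENNReal.ofReal (∏ a ∈ x.support, b γ (y a) (z a)) * M z S) := by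
      intro z _; rw [ENNReal.ofReal_mul h1γ, mul_assoc]
    rw [Finset.sum_congr rfl h1, ← Finset.mul_sum]
    congr 1
    rw [subsampled_apply]
    refine (Finset.sum_subset (Finset.Iic_subset_Iic.mpr hyx) ?_).symm.trans ?_
    · intro z hzx hzy
      rw [Finset.mem_Iic] at hzx hzy
      have : ∃ a, y a < z a := by
        by_contra h
        push_neg at h
        exact hzy h
      obtain ⟨a, hay⟩ := this
      have haz : a ∈ x.support := by
        rw [Finsupp.mem_support_iff]
        have := hzx a
        omega
      rw [Finset.prod_eq_zero haz (b_zero_of_lt hay)]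
      simp
    · refine Finset.sum_congr rfl fun z hz => ?_
      rw [Finset.mem_Iic] at hz
      rw [prod_congr_support hsupp hz]
  · -- second term
    set T := (Finset.Iic y).image (· + e) with hT
    have hTsub : T ⊆ Finset.Iic x := by
      intro z hzT
      rw [hT, Finset.mem_image] at hzT
      obtain ⟨w, hw, rfl⟩ := hzT
      rw [Finset.mem_Iic] at hw ⊢
      rw [hx]
      exact add_le_add_left hw e
    have hvan : ∀ z ∈ Finset.Iic x, z ∉ T →
        ENNReal.ofReal (if z a₀ = 0 then 0
            else γ * ∏ a ∈ x.support, b γ (y a) ((z-e) a)) * M z S = 0 := by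
      intro z hz hzT
      have hz0 : z a₀ = 0 := by
        by_contra h
        apply hzT
        rw [hT, Finset.mem_image]
        have hez : e ≤ z := by
          rw [he, Finsupp.single_le_iff]; omega
        refine ⟨z - e, ?_, tsub_add_cancel_of_le hez⟩
        rw [Finset.mem_Iic] at hz ⊢
        rw [hx] at hz
        exact tsub_le_iff_right.mpr hz
      simp [hz0]
    rw [← Finset.sum_subset hTsub hvan, hT,
      Finset.sum_image (fun w _ w' _ h => add_right_cancel h)]
    rw [Finset.mul_sum]
    refine Finset.sum_congr rfl fun w hw => ?_
    rw [Finset.mem_Iic] at hw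
    have h0 : (w + e) a₀ ≠ 0 := by simp [he]
    rw [if_neg h0, add_tsub_cancel_right, ENNReal.ofReal_mul hγ0.le,
      prod_congr_support hsupp hw, mul_assoc]

end PAS

/-- **Privacy amplification via subsampling.** Let `γ ∈ (0,1]` and let `M` be an
`(ε, δ)`-differentially private mechanism (w.r.t. add/remove-one neighboring). Then the
mechanism that independently retains each record with probability `γ` before applying `M`
is `(ε', γ δ)`-differentially private with `ε' = ln (1 + γ (e^ε - 1))`; in particular
`ε' ≤ γ (e^ε - 1)`. -/
theorem privacy_amplification_subsampling {𝒳 : Type*} [DecidableEq 𝒳]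
    {Ω : Type*} [MeasurableSpace Ω]
    (M : (𝒳 →₀ ℕ) → Measure Ω) (hM : ∀ x, IsProbabilityMeasure (M x))
    (ε δ : ℝ) (hε : 0 ≤ ε) (hδ : 0 ≤ δ) (hdp : IsDP M ε δ)
    (γ : ℝ) (hγ0 : 0 < γ) (hγ1 : γ ≤ 1) :
    IsDP (subsampledMechanism M γ) (Real.log (1 + γ * (Real.exp ε - 1))) (γ * δ) ∧
      Real.log (1 + γ * (Real.exp ε - 1)) ≤ γ * (Real.exp ε - 1) := by
  have hu : 1 ≤ Real.exp ε := Real.one_le_exp hε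
  have hc0 : (0:ℝ) < 1 + γ * (Real.exp ε - 1) := by nlinarith
  constructor
  · intro x y hnb S hS
    rw [Real.exp_log hc0]
    have main : ∀ (y₀ : 𝒳 →₀ ℕ) (a₀ : 𝒳),
        subsampledMechanism M γ (y₀ + Finsupp.single a₀ 1) S
            ≤ ENNReal.ofReal (1 + γ * (Real.exp ε - 1)) * subsampledMechanism M γ y₀ S
              + ENNReal.ofReal (γ * δ) ∧
        subsampledMechanism M γ y₀ S
            ≤ ENNReal.ofReal (1 + γ * (Real.exp ε - 1))
                * subsampledMechanism M γ (y₀ + Finsupp.single a₀ 1) S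
              + ENNReal.ofReal (γ * δ) := by
      intro y₀ a₀
      set Q : (𝒳 →₀ ℕ) → ENNReal :=
        fun w => ENNReal.ofReal (∏ a ∈ y₀.support, PAS.b γ (y₀ a) (w a)) with hQ
      set B := subsampledMechanism M γ y₀ S with hB
      set A := ∑ w ∈ Finset.Iic y₀, Q w * M (w + Finsupp.single a₀ 1) S with hA
      have hdecomp : subsampledMechanism M γ (y₀ + Finsupp.single a₀ 1) S
          = ENNReal.ofReal (1-γ) * B + ENNReal.ofReal γ * A :=
        PAS.decomp M hγ0 hγ1 y₀ a₀ S
      have hT : ∑ w ∈ Finset.Iic y₀, Q w = 1 := by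
        rw [hQ, ← ENNReal.ofReal_sum_of_nonneg fun w _ =>
          Finset.prod_nonneg fun a _ => PAS.b_nonneg hγ0.le hγ1 _ _,
          PAS.sum_Iic_P, ENNReal.ofReal_one]
      have hBsum : B = ∑ w ∈ Finset.Iic y₀, Q w * M w S := PAS.subsampled_apply M γ y₀ S
      have hsum_le : ∀ N : (𝒳 →₀ ℕ) → Measure Ω, (∀ z, IsProbabilityMeasure (N z)) →
          ∑ w ∈ Finset.Iic y₀, Q w * N w S ≤ 1 := by
        intro N hN
        calc ∑ w ∈ Finset.Iic y₀, Q w * N w S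
            ≤ ∑ w ∈ Finset.Iic y₀, Q w * 1 := by
              refine Finset.sum_le_sum fun w _ => mul_le_mul_right ?_ _
              haveI := hN w
              exact prob_le_one
          _ = 1 := by
              simp only [mul_one]
              exact hT
      have hBle : B ≤ 1 := hBsum ▸ hsum_le M hM
      have hAle : A ≤ 1 := hsum_le (fun w => M (w + Finsupp.single a₀ 1)) (fun w => hM _)
      have hABle : A ≤ ENNReal.ofReal (Real.exp ε) * B + ENNReal.ofReal δ := by
        rw [hA, hBsum]
        calc ∑ w ∈ Finset.Iic y₀, Q w * M (w + Finsupp.single a₀ 1) S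
            ≤ ∑ w ∈ Finset.Iic y₀,
                Q w * (ENNReal.ofReal (Real.exp ε) * M w S + ENNReal.ofReal δ) := by
              refine Finset.sum_le_sum fun w _ => mul_le_mul_right ?_ _
              exact hdp _ _ (PAS.neighboring_add_single w a₀).2 S hS
          _ = ENNReal.ofReal (Real.exp ε) * ∑ w ∈ Finset.Iic y₀, Q w * M w S
              + ENNReal.ofReal δ * ∑ w ∈ Finset.Iic y₀, Q w := by
              rw [Finset.mul_sum, Finset.mul_sum, ← Finset.sum_add_distrib]
              refine Finset.sum_congr rfl fun w _ => ?_
              ring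
          _ = ENNReal.ofReal (Real.exp ε) * ∑ w ∈ Finset.Iic y₀, Q w * M w S
              + ENNReal.ofReal δ := by rw [hT, mul_one]
      have hBAle : B ≤ ENNReal.ofReal (Real.exp ε) * A + ENNReal.ofReal δ := by
        rw [hA, hBsum]
        calc ∑ w ∈ Finset.Iic y₀, Q w * M w S
            ≤ ∑ w ∈ Finset.Iic y₀,
                Q w * (ENNReal.ofReal (Real.exp ε) * M (w + Finsupp.single a₀ 1) S
                  + ENNReal.ofReal δ) := by
              refine Finset.sum_le_sum fun w _ => mul_le_mul_right ?_ _
              exact hdp _ _ (PAS.neighboring_add_single w a₀).1 S hS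
          _ = ENNReal.ofReal (Real.exp ε)
                * ∑ w ∈ Finset.Iic y₀, Q w * M (w + Finsupp.single a₀ 1) S
              + ENNReal.ofReal δ * ∑ w ∈ Finset.Iic y₀, Q w := by
              rw [Finset.mul_sum, Finset.mul_sum, ← Finset.sum_add_distrib]
              refine Finset.sum_congr rfl fun w _ => ?_
              ring
          _ = ENNReal.ofReal (Real.exp ε)
                * ∑ w ∈ Finset.Iic y₀, Q w * M (w + Finsupp.single a₀ 1) S
              + ENNReal.ofReal δ := by rw [hT, mul_one]
      have hBne : B ≠ ⊤ := ne_top_of_le_ne_top ENNReal.one_ne_top hBle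
      have hAne : A ≠ ⊤ := ne_top_of_le_ne_top ENNReal.one_ne_top hAle
      have hAeq : A = ENNReal.ofReal A.toReal := (ENNReal.ofReal_toReal hAne).symm
      have hBeq : B = ENNReal.ofReal B.toReal := (ENNReal.ofReal_toReal hBne).symm
      set α := A.toReal with hα
      set β := B.toReal with hβ
      have hα0 : (0:ℝ) ≤ α := ENNReal.toReal_nonneg
      have hβ0 : (0:ℝ) ≤ β := ENNReal.toReal_nonneg
      clear_value α β
      have hu0 : (0:ℝ) ≤ Real.exp ε := by linarith
      have h1γ : (0:ℝ) ≤ 1 - γ := by linarith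
      have hαβ : α ≤ Real.exp ε * β + δ := by
        have h := hABle
        rw [hAeq, hBeq, ← ENNReal.ofReal_mul hu0,
          ← ENNReal.ofReal_add (mul_nonneg hu0 hβ0) hδ] at h
        exact (ENNReal.ofReal_le_ofReal_iff (add_nonneg (mul_nonneg hu0 hβ0) hδ)).mp h
      have hβα : β ≤ Real.exp ε * α + δ := by
        have h := hBAle
        rw [hAeq, hBeq, ← ENNReal.ofReal_mul hu0,
          ← ENNReal.ofReal_add (mul_nonneg hu0 hα0) hδ] at h
        exact (ENNReal.ofReal_le_ofReal_iff (add_nonneg (mul_nonneg hu0 hα0) hδ)).mp h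
      constructor
      · rw [hdecomp, hBeq, hAeq, ← ENNReal.ofReal_mul h1γ, ← ENNReal.ofReal_mul hγ0.le,
          ← ENNReal.ofReal_add (mul_nonneg h1γ hβ0) (mul_nonneg hγ0.le hα0),
          ← ENNReal.ofReal_mul hc0.le,
          ← ENNReal.ofReal_add (mul_nonneg hc0.le hβ0) (mul_nonneg hγ0.le hδ)]
        apply ENNReal.ofReal_le_ofReal
        nlinarith [mul_le_mul_of_nonneg_left hαβ hγ0.le]
      · rw [hdecomp, hBeq, hAeq, ← ENNReal.ofReal_mul h1γ, ← ENNReal.ofReal_mul hγ0.le,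
          ← ENNReal.ofReal_add (mul_nonneg h1γ hβ0) (mul_nonneg hγ0.le hα0),
          ← ENNReal.ofReal_mul hc0.le,
          ← ENNReal.ofReal_add (mul_nonneg hc0.le (add_nonneg (mul_nonneg h1γ hβ0)
            (mul_nonneg hγ0.le hα0))) (mul_nonneg hγ0.le hδ)]
        apply ENNReal.ofReal_le_ofReal
        nlinarith [mul_le_mul_of_nonneg_left hβα (mul_nonneg hc0.le hγ0.le),
          mul_nonneg (mul_nonneg (mul_nonneg hγ0.le h1γ)
            (sq_nonneg (Real.exp ε - 1))) hβ0,
          mul_nonneg (mul_nonneg (mul_nonneg hγ0.le hδ) h1γ)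
            (by linarith : (0:ℝ) ≤ Real.exp ε - 1),
          Real.exp_pos ε]
    rcases PAS.neighbor_classify hnb with rfl | ⟨a₀, rfl⟩ | ⟨a₀, rfl⟩
    · refine le_add_right ?_
      conv_lhs => rw [← one_mul (subsampledMechanism M γ x S)]
      refine mul_le_mul_left ?_ _
      rw [← ENNReal.ofReal_one]
      exact ENNReal.ofReal_le_ofReal (by nlinarith)
    · exact (main y a₀).1
    · exact (main x a₀).2
  · have h := Real.log_le_sub_one_of_pos hc0
    linarith
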